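/- Let r ≥ 7 be a prime and ζ ∈ ℂ a primitive r-th root of unity, and let τ_P = Σ_{n=0}^{r−2} ζ^n · (1 + ζ + ⋯ + ζ^n) · Π_{j=n+2}^{2n+1} (1 − ζ^j) ∈ ℤ[ζ]. Then there exist integers c_0, c_2 and an element y ∈ ℤ[ζ] such that τ_P = c_0 + 6·(1−ζ) + c_2·(1−ζ)² + 464·(1−ζ)³ + (1−ζ)⁴·y. (That is, in the (1−ζ)-adic expansion of τ_P the coefficients satisfy a_1(τ_P) ≡ 6 and a_3(τ_P) ≡ 464 modulo r.) -/

import Mathlib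

set_option maxHeartbeats 1000000 in
/-- The `(1-ζ)`-adic expansion of the quantum invariant `τ_P` of the Poincaré
sphere has `a₁(τ_P) ≡ 6` and `a₃(τ_P) ≡ 464` modulo `r`. -/
theorem poincare_tau_adic_coeffs
    (r : ℕ) (hr : r.Prime) (hr7 : 7 ≤ r) (ζ : ℂ) (hζ : IsPrimitiveRoot ζ r) :
    ∃ c₀ c₂ : ℤ, ∃ y ∈ Subring.closure ({ζ} : Set ℂ),
      (∑ n ∈ Finset.range (r - 1), ζ ^ n * (∑ k ∈ Finset.range (n + 1), ζ ^ k) *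
          ∏ j ∈ Finset.Icc (n + 2) (2 * n + 1), (1 - ζ ^ j))
        = (c₀ : ℂ) + 6 * (1 - ζ) + (c₂ : ℂ) * (1 - ζ) ^ 2 + 464 * (1 - ζ) ^ 3
          + (1 - ζ) ^ 4 * y := by
  set S := Subring.closure ({ζ} : Set ℂ) with hS
  have hζS : ζ ∈ S := Subring.subset_closure rfl
  have hpowS : ∀ m : ℕ, ζ ^ m ∈ S := fun m => S.pow_mem hζS m
  have h1ζ : (1 - ζ) ∈ S := S.sub_mem S.one_mem hζS
  -- each factor is (1-ζ) times an element of S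
  have hfac : ∀ j : ℕ, ∃ u ∈ S, 1 - ζ ^ j = (1 - ζ) * u := by
    intro j
    refine ⟨∑ i ∈ Finset.range j, ζ ^ i, Subring.sum_mem _ fun i _ => hpowS i, ?_⟩
    have := geom_sum_mul ζ j
    linear_combination this
  -- products over finsets
  have hprodgen : ∀ s : Finset ℕ, ∃ u ∈ S,
      (∏ j ∈ s, (1 - ζ ^ j)) = (1 - ζ) ^ s.card * u := by
    intro s
    induction s using Finset.induction with
    | empty => exact ⟨1, S.one_mem, by simp⟩
    | insert _ _ hx ih =>
      obtain ⟨u, huS, hu⟩ := ih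
      obtain ⟨v, hvS, hv⟩ := hfac _
      refine ⟨v * u, S.mul_mem hvS huS, ?_⟩
      rw [Finset.prod_insert hx, Finset.card_insert_of_notMem hx, hu, hv, pow_succ]
      ring
  have hprod : ∀ n : ℕ, ∃ u ∈ S,
      (∏ j ∈ Finset.Icc (n + 2) (2 * n + 1), (1 - ζ ^ j)) = (1 - ζ) ^ n * u := by
    intro n
    obtain ⟨u, huS, hu⟩ := hprodgen (Finset.Icc (n + 2) (2 * n + 1))
    refine ⟨u, huS, ?_⟩
    rwa [Nat.card_Icc, show 2 * n + 1 + 1 - (n + 2) = n by omega] at hu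
  choose u huS hueq using hprod
  have h4 : 4 ≤ r - 1 := by omega
  -- split the sum
  rw [Finset.range_eq_Ico (r-1), ← Finset.sum_Ico_consecutive _ (Nat.zero_le 4) h4]
  -- tail
  set y₁ : ℂ := ∑ n ∈ Finset.Ico 4 (r - 1),
      ζ ^ n * (∑ k ∈ Finset.range (n + 1), ζ ^ k) * ((1 - ζ) ^ (n - 4) * u n) with hy₁
  have hy₁S : y₁ ∈ S := by
    refine Subring.sum_mem _ fun n _ => ?_
    exact S.mul_mem (S.mul_mem (hpowS n)
      (Subring.sum_mem _ fun k _ => hpowS k))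
      (S.mul_mem (S.pow_mem h1ζ _) (huS n))
  have htail : (∑ n ∈ Finset.Ico 4 (r - 1), ζ ^ n * (∑ k ∈ Finset.range (n + 1), ζ ^ k) *
      ∏ j ∈ Finset.Icc (n + 2) (2 * n + 1), (1 - ζ ^ j)) = (1 - ζ) ^ 4 * y₁ := by
    rw [hy₁, Finset.mul_sum]
    refine Finset.sum_congr rfl fun n hn => ?_
    have hn4 : 4 ≤ n := (Finset.mem_Ico.1 hn).1
    have hp : (1 - ζ) ^ n = (1 - ζ) ^ 4 * (1 - ζ) ^ (n - 4) := by
      rw [← pow_add]; congr 1; omega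
    rw [hueq n, hp]; ring
  rw [htail]
  -- head
  set Q : ℂ := -(515 + 571 * ζ ^ 1 + 629 * ζ ^ 2 + 684 * ζ ^ 3 + 730 * ζ ^ 4 + 761 * ζ ^ 5
      + 771 * ζ ^ 6 + 756 * ζ ^ 7 + 715 * ζ ^ 8 + 650 * ζ ^ 9 + 566 * ζ ^ 10 + 470 * ζ ^ 11
      + 370 * ζ ^ 12 + 274 * ζ ^ 13 + 189 * ζ ^ 14 + 120 * ζ ^ 15 + 69 * ζ ^ 16 + 35 * ζ ^ 17
      + 15 * ζ ^ 18 + 5 * ζ ^ 19 + ζ ^ 20) with hQ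
  have hQS : Q ∈ S := by
    rw [hQ]
    refine S.neg_mem ?_
    repeat' first
      | apply S.add_mem
      | apply S.mul_mem
      | exact hpowS _
      | exact hζS
      | exact ofNat_mem S _
  have hhead : (∑ n ∈ Finset.Ico 0 4, ζ ^ n * (∑ k ∈ Finset.range (n + 1), ζ ^ k) *
      ∏ j ∈ Finset.Icc (n + 2) (2 * n + 1), (1 - ζ ^ j))
      = 1 + 6 * (1 - ζ) + 45 * (1 - ζ) ^ 2 + 464 * (1 - ζ) ^ 3 + (1 - ζ) ^ 4 * Q := by
    rw [← Finset.range_eq_Ico]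
    simp only [Finset.sum_range_succ, Finset.sum_range_zero, Finset.sum_range_one,
      show Finset.Icc 2 1 = (∅ : Finset ℕ) by decide,
      show Finset.Icc 3 3 = ({3} : Finset ℕ) by decide,
      show Finset.Icc 4 5 = ({4, 5} : Finset ℕ) by decide,
      show Finset.Icc 5 7 = ({5, 6, 7} : Finset ℕ) by decide,
      Finset.prod_empty, Finset.prod_singleton, Finset.prod_insert, hQ]
    norm_num [Finset.prod_insert, Finset.mem_insert, Finset.mem_singleton]
    ring
  rw [hhead]
  exact ⟨1, 45, Q + y₁, S.add_mem hQS hy₁S, by push_cast; ring⟩
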